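/- Let G be a connected simple graph on a finite nonempty vertex set V, and suppose a word w = u ++ X ++ X ++ v represents G, where X is a word of length at least 2 (so that XX is a non-trivial square) and u, v are possibly empty words. Then every vertex of V occurs in X. -/
import Mathlib


variable {V : Type*} [DecidableEq V]

/-- Distinct letters `x` and `y` alternate in `w`: deleting all other letters
leaves no two equal consecutive letters. -/
def Alternates (x y : V) (w : List V) : Prop :=
  (w.filter fun z => decide (z = x ∨ z = y)).Chain' (· ≠ ·)

/-- `w` represents the graph `G`: every vertex occurs in `w`, and distinct
vertices alternate in `w` iff they are adjacent in `G`. -/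
def Represents (G : SimpleGraph V) (w : List V) : Prop :=
  (∀ v : V, v ∈ w) ∧ ∀ x y : V, x ≠ y → (Alternates x y w ↔ G.Adj x y)

/-- `w` contains a square. -/
def HasSquare (w : List V) : Prop :=
  ∃ u X v : List V, X ≠ [] ∧ w = u ++ X ++ X ++ v

/-- `w` is square-free. -/
def SqFree (w : List V) : Prop := ¬ HasSquare w

theorem square_contains_all_vertices {V : Type*} [DecidableEq V] [Fintype V] [Nonempty V]
    (G : SimpleGraph V) (hconn : G.Connected)
    (u X v : List V) (hX : 2 ≤ X.length)
    (hrep : Represents G (u ++ X ++ X ++ v)) :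
    ∀ x : V, x ∈ X := by
  by_contra h
  push_neg at h
  obtain ⟨y0, hy0⟩ := h
  have hXne : X ≠ [] := by rintro rfl; simp at hX
  obtain ⟨x0, hx0⟩ := List.exists_mem_of_ne_nil X hXne
  obtain ⟨p⟩ := hconn x0 y0
  obtain ⟨d, hdmem, hdS⟩ := p.exists_boundary_dart {z | z ∈ X} hx0 hy0
  set x := d.fst
  set y := d.snd
  have hadj : G.Adj x y := d.adj
  have hne : x ≠ y := hadj.ne
  have halt : Alternates x y (u ++ X ++ X ++ v) := (hrep.2 x y hne).mpr hadj
  have hxX : x ∈ X := hdS.1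
  have hyX : y ∉ X := hdS.2
  -- filter of X is a replicate of x
  set P := fun z => decide (z = x ∨ z = y) with hP
  have hrep' : ∀ z ∈ X.filter P, z = x := by
    intro z hz
    rw [List.mem_filter] at hz
    rcases hz with ⟨hzX, hzP⟩
    simp only [hP, decide_eq_true_eq] at hzP
    rcases hzP with rfl | rfl
    · rfl
    · exact absurd hzX hyX
  have hxf : x ∈ X.filter P := by
    rw [List.mem_filter]
    exact ⟨hxX, by simp [hP]⟩
  have hlen : 1 ≤ (X.filter P).length := List.length_pos_iff.mpr (by rintro h; rw [h] at hxf; simp at hxf)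
  have heq : X.filter P = List.replicate (X.filter P).length x := List.eq_replicate_of_mem hrep'
  unfold Alternates at halt
  have hinfix : ((X ++ X).filter P) <:+: ((u ++ X ++ X ++ v).filter P) := by
    have : (u ++ X ++ X ++ v) = u ++ (X ++ X) ++ v := by simp [List.append_assoc]
    rw [this, List.filter_append, List.filter_append]
    exact ⟨u.filter P, v.filter P, by simp [List.filter_append]⟩
  have hchain : ((X ++ X).filter P).Chain' (· ≠ ·) := halt.infix hinfix
  rw [List.filter_append, heq, ← List.replicate_add] at hchain
  set n := (X.filter P).length
  have h2 : 2 ≤ n + n := by omega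
  obtain ⟨m, hm⟩ : ∃ m, n + n = m + 2 := ⟨n + n - 2, by omega⟩
  rw [hm] at hchain
  rw [show m + 2 = m + 1 + 1 from rfl, List.replicate_succ' , List.replicate_succ'] at hchain
  have := List.isChain_append.mp hchain
  exact absurd rfl (by
    have h' := this.2.2
    have : x ≠ x := by
      have := h' x (by simp) x (by simp)
      exact this
    exact this)
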